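/- Let N ≥ 2 be an integer and let f₀, f₁, …, f_{2N} : ℂ \ {0} → ℂ be holomorphic functions satisfying: (1/(2N))·z·f_i′(z) = f_{i+1}(z) for all z ≠ 0 and 0 ≤ i ≤ 2N−2; (1/(2N))·z·f_{2N−1}′(z) = f_{2N}(z) + 2·f₀(z)·z^{−2N} for all z ≠ 0; and (1/(2N))·z·f_{2N}′(z) = 2·f₁(z)·z^{−2N} for all z ≠ 0. Let D denote the operator sending a function g to z ↦ z·g′(z). Then: f_i = (2N)^{−i}·D^i f₀ for 0 ≤ i ≤ 2N−1; f_{2N}(z) = (2N)^{−2N}·(D^{2N} f₀)(z) − 2·f₀(z)·z^{−2N} for all z ≠ 0; and (D^{2N+1} f₀)(z) = (2N)^{2N}·z^{−2N}·(4·z·f₀′(z) − 4N·f₀(z)) for all z ≠ 0. -/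

import Mathlib

/-- The operator `D = z·d/dz` on functions on `ℂ`. -/
noncomputable def Dop : (ℂ → ℂ) → (ℂ → ℂ) := fun g z => z * deriv g z

/-- (Lemma 6.4 of the paper.) If the holomorphic functions
`f₀, …, f_{2N}` on `ℂ \ {0}` satisfy the component equations of the flatness equation
for the Dubrovin connection of `Q_{2N}` at the origin, then `f_i = (2N)^{−i} Dⁱ f₀` for
`0 ≤ i ≤ 2N−1`, `f_{2N} = (2N)^{−2N} D^{2N} f₀ − 2 f₀ z^{−2N}`, and `f₀` satisfies the
scalar quantum differential equation
`D^{2N+1} f₀ = (2N)^{2N} z^{−2N} (4 z f₀′ − 4N f₀)`. -/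
theorem stmt_12 (N : ℕ) (hN : 2 ≤ N) (f : ℕ → ℂ → ℂ)
    (hf : ∀ i ≤ 2*N, DifferentiableOn ℂ (f i) {(0 : ℂ)}ᶜ)
    (h1 : ∀ i ≤ 2*N - 2, ∀ z : ℂ, z ≠ 0 →
      (1 / (2*N : ℂ)) * z * deriv (f i) z = f (i+1) z)
    (h2 : ∀ z : ℂ, z ≠ 0 →
      (1 / (2*N : ℂ)) * z * deriv (f (2*N - 1)) z = f (2*N) z + 2 * f 0 z / z ^ (2*N))
    (h3 : ∀ z : ℂ, z ≠ 0 →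
      (1 / (2*N : ℂ)) * z * deriv (f (2*N)) z = 2 * f 1 z / z ^ (2*N)) :
    (∀ i ≤ 2*N - 1, ∀ z : ℂ, z ≠ 0 → f i z = (Dop^[i] (f 0)) z / (2*N : ℂ) ^ i) ∧
    (∀ z : ℂ, z ≠ 0 →
      f (2*N) z = (Dop^[2*N] (f 0)) z / (2*N : ℂ) ^ (2*N) - 2 * f 0 z / z ^ (2*N)) ∧
    (∀ z : ℂ, z ≠ 0 → (Dop^[2*N+1] (f 0)) z
      = (2*N : ℂ) ^ (2*N) / z ^ (2*N) * (4 * z * deriv (f 0) z - 4*(N : ℂ) * f 0 z)) := by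
  have hc : (2*N : ℂ) ≠ 0 := by
    have : (N:ℂ) ≠ 0 := Nat.cast_ne_zero.mpr (by omega)
    simp [this]
  have hev : ∀ {g h : ℂ → ℂ}, (∀ w : ℂ, w ≠ 0 → g w = h w) → ∀ z : ℂ, z ≠ 0 →
      g =ᶠ[nhds z] h := by
    intro g h H z hz
    filter_upwards [isOpen_compl_singleton.mem_nhds hz] with w hw
    exact H w hw
  -- Part 1
  have key : ∀ i ≤ 2*N - 1, ∀ z : ℂ, z ≠ 0 → f i z = (Dop^[i] (f 0)) z / (2*N : ℂ) ^ i := by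
    intro i
    induction i with
    | zero => intro _ z hz; simp
    | succ i ih =>
      intro hi z hz
      have hi' : i ≤ 2*N - 2 := by omega
      have hprev : ∀ w : ℂ, w ≠ 0 → f i w = (Dop^[i] (f 0)) w / (2*N : ℂ) ^ i :=
        ih (by omega)
      have hd : deriv (f i) z = deriv (Dop^[i] (f 0)) z / (2*N : ℂ) ^ i := by
        rw [(hev hprev z hz).deriv_eq, deriv_div_const]
      rw [← h1 i hi' z hz, hd, Function.iterate_succ_apply']
      show _ = z * deriv (Dop^[i] (f 0)) z / (2*N : ℂ) ^ (i+1)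
      rw [pow_succ]
      field_simp
      try ring
      try tauto
  -- Part 2
  have key2 : ∀ z : ℂ, z ≠ 0 →
      f (2*N) z = (Dop^[2*N] (f 0)) z / (2*N : ℂ) ^ (2*N) - 2 * f 0 z / z ^ (2*N) := by
    intro z hz
    have hprev : ∀ w : ℂ, w ≠ 0 →
        f (2*N-1) w = (Dop^[2*N-1] (f 0)) w / (2*N : ℂ) ^ (2*N-1) := key (2*N-1) le_rfl
    have hd : deriv (f (2*N-1)) z = deriv (Dop^[2*N-1] (f 0)) z / (2*N : ℂ) ^ (2*N-1) := by
      rw [(hev hprev z hz).deriv_eq, deriv_div_const]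
    have hs : 2*N = (2*N-1) + 1 := by omega
    have h2' := h2 z hz
    rw [hd] at h2'
    have hgoal : f (2*N) z = 1 / (2*N:ℂ) * z * (deriv (Dop^[2*N-1] (f 0)) z / (2*N:ℂ)^(2*N-1))
        - 2 * f 0 z / z ^ (2*N) := by linear_combination -h2'
    rw [hgoal]
    congr 1
    rw [hs, Function.iterate_succ_apply']
    show _ = z * deriv (Dop^[2*N-1] (f 0)) z / (2*N : ℂ) ^ (2*N-1+1)
    rw [pow_succ]
    field_simp
    simp only [Nat.add_sub_cancel, Nat.add_sub_cancel_left]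
    try ring
    try tauto
  refine ⟨key, key2, ?_⟩
  -- Part 3
  intro z hz
  have hz' : z ∈ ({(0:ℂ)}ᶜ : Set ℂ) := hz
  have hmem := isOpen_compl_singleton.mem_nhds hz'
  have hdf2N : DifferentiableAt ℂ (f (2*N)) z :=
    (hf (2*N) le_rfl).differentiableAt hmem
  have hdf0 : DifferentiableAt ℂ (f 0) z :=
    (hf 0 (by omega)).differentiableAt hmem
  have hzpow : (z : ℂ) ^ (2*N) ≠ 0 := pow_ne_zero _ hz
  have hg : ∀ w : ℂ, w ≠ 0 → (Dop^[2*N] (f 0)) w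
      = (2*N:ℂ)^(2*N) * (f (2*N) w + 2 * f 0 w / w ^ (2*N)) := by
    intro w hw
    have hwp : (w:ℂ)^(2*N) ≠ 0 := pow_ne_zero _ hw
    have hcp : ((2*N:ℂ))^(2*N) ≠ 0 := pow_ne_zero _ hc
    rw [key2 w hw]
    field_simp
    ring
  have hpow : HasDerivAt (fun w : ℂ => w ^ (2*N)) ((2*N : ℂ) * z ^ (2*N-1)) z := by
    have := hasDerivAt_pow (2*N) z
    simpa using this
  have hq : HasDerivAt (fun w : ℂ => 2 * f 0 w / w ^ (2*N))
      ((2 * deriv (f 0) z * z ^ (2*N) - 2 * f 0 z * ((2*N:ℂ) * z ^ (2*N-1)))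
        / (z ^ (2*N)) ^ 2) z :=
    (((hdf0.hasDerivAt).const_mul 2).div hpow hzpow)
  have hR : HasDerivAt (fun w => (2*N:ℂ)^(2*N) * (f (2*N) w + 2 * f 0 w / w ^ (2*N)))
      ((2*N:ℂ)^(2*N) * (deriv (f (2*N)) z +
        (2 * deriv (f 0) z * z ^ (2*N) - 2 * f 0 z * ((2*N:ℂ) * z ^ (2*N-1)))
        / (z ^ (2*N)) ^ 2)) z :=
    ((hdf2N.hasDerivAt).add hq).const_mul _
  have hderiv : deriv (Dop^[2*N] (f 0)) z
      = (2*N:ℂ)^(2*N) * (deriv (f (2*N)) z +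
        (2 * deriv (f 0) z * z ^ (2*N) - 2 * f 0 z * ((2*N:ℂ) * z ^ (2*N-1)))
        / (z ^ (2*N)) ^ 2) := by
    rw [(hev hg z hz).deriv_eq]
    exact hR.deriv
  have hf1 : f 1 z = z * deriv (f 0) z / (2*N:ℂ) := by
    have := key 1 (by omega) z hz
    simpa [Dop] using this
  have h3' := h3 z hz
  have hd2Nval : deriv (f (2*N)) z = 2 * deriv (f 0) z / z ^ (2*N) := by
    apply mul_left_cancel₀ hz
    have hA : z * deriv (f (2*N)) z = (2*N:ℂ) * (2 * f 1 z / z ^ (2*N)) := by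
      rw [← h3']; field_simp
      rw [mul_div_cancel_right₀ _ (by exact_mod_cast (by omega : N ≠ 0))]
    rw [hA, hf1]
    field_simp
    try ring
    rw [mul_comm, ← mul_assoc, inv_mul_cancel₀ (by exact_mod_cast (by omega : N ≠ 0)), one_mul]
  have hit : (Dop^[2*N+1] (f 0)) z = z * deriv (Dop^[2*N] (f 0)) z := by
    rw [Function.iterate_succ_apply']; rfl
  have hz1 : z ^ (2*N-1) * z = z ^ (2*N) := by
    rw [← pow_succ]; congr 1; omega
  have hz2 : (z:ℂ)^(2*N-1) = z^(2*N)/z := by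
    field_simp [← hz1]
    exact hz1
  rw [hz2] at hderiv
  rw [hit, hderiv, hd2Nval]
  field_simp
  ring
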